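/- Suppose the measure μ has compact support and ∫₀^∞ g(r) dr = ∞ (i.e., ∫₀^ρ g(r) dr → ∞ as ρ → ∞). Then there exists a point x_c ∈ ℝⁿ with V(x_c) = 0. -/

import Mathlib

open MeasureTheory Filter Set
open scoped RealInnerProductSpace Topology

/-- The radial vector field `v(y) = g(|y|) y/|y|` (with `v(0)=0`, since division by
zero yields zero and `y = 0` makes the whole expression vanish). -/
noncomputable def radialField {n : ℕ} (g : ℝ → ℝ)
    (y : EuclideanSpace ℝ (Fin n)) : EuclideanSpace ℝ (Fin n) :=
  (g ‖y‖ / ‖y‖) • y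

/-- The vector field `V(x) = ∫ v(x+y) dμ(y)`. -/
noncomputable def VField {n : ℕ} (g : ℝ → ℝ)
    (μ : Measure (EuclideanSpace ℝ (Fin n)))
    (x : EuclideanSpace ℝ (Fin n)) : EuclideanSpace ℝ (Fin n) :=
  ∫ y, radialField g (x + y) ∂μ

lemma norm_radialField_le {n : ℕ} (g : ℝ → ℝ) (z : EuclideanSpace ℝ (Fin n)) :
    ‖radialField g z‖ ≤ |g ‖z‖| := by
  rcases eq_or_ne z 0 with rfl | hz
  · simp [radialField]
  · rw [radialField, norm_smul, norm_div, Real.norm_eq_abs, Real.norm_eq_abs, abs_norm,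
      div_mul_cancel₀ _ (norm_ne_zero_iff.2 hz)]

lemma radialField_continuous {n : ℕ} {g : ℝ → ℝ} (hg : Continuous g) (hg0 : g 0 = 0) :
    Continuous (radialField (n := n) g) := by
  rw [continuous_iff_continuousAt]
  intro z
  rcases eq_or_ne z 0 with rfl | hz
  · have h0 : radialField g (0 : EuclideanSpace ℝ (Fin n)) = 0 := by simp [radialField]
    rw [ContinuousAt, h0]
    apply squeeze_zero_norm (fun y => norm_radialField_le g y)
    have h1 : Tendsto (fun y : EuclideanSpace ℝ (Fin n) => |g ‖y‖|) (𝓝 0)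
        (𝓝 |g ‖(0 : EuclideanSpace ℝ (Fin n))‖|) :=
      ((continuous_abs.comp (hg.comp continuous_norm)).tendsto 0)
    simpa [hg0] using h1
  · exact (((hg.comp continuous_norm).continuousAt.div continuous_norm.continuousAt
      (norm_ne_zero_iff.2 hz)).smul continuousAt_id)

lemma hasFDerivAt_primitive_norm {n : ℕ} {g : ℝ → ℝ} (hg : Continuous g) (hg0 : g 0 = 0)
    (z : EuclideanSpace ℝ (Fin n)) :
    HasFDerivAt (fun w : EuclideanSpace ℝ (Fin n) => ∫ t in (0:ℝ)..‖w‖, g t)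
      (innerSL ℝ (radialField g z)) z := by
  have hG : ∀ r : ℝ, HasDerivAt (fun u => ∫ t in (0:ℝ)..u, g t) (g r) r := fun r =>
    intervalIntegral.integral_hasDerivAt_right (hg.intervalIntegrable _ _)
      (hg.stronglyMeasurableAtFilter _ _) hg.continuousAt
  rcases eq_or_ne z 0 with rfl | hz
  · have hrad : radialField g (0 : EuclideanSpace ℝ (Fin n)) = 0 := by simp [radialField]
    rw [hrad, map_zero, hasFDerivAt_iff_isLittleO_nhds_zero]
    have h1 : (fun u : ℝ => ∫ t in (0:ℝ)..u, g t) =o[nhds 0] (fun u => u) := by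
      have h := (hG 0).hasFDerivAt
      rw [hasFDerivAt_iff_isLittleO_nhds_zero] at h
      simpa [hg0] using h
    have h2 : Tendsto (fun h : EuclideanSpace ℝ (Fin n) => ‖h‖) (𝓝 0) (𝓝 0) := by
      simpa using continuous_norm.tendsto (0 : EuclideanSpace ℝ (Fin n))
    have h3 := h1.comp_tendsto h2
    have h4 : (fun h : EuclideanSpace ℝ (Fin n) => ‖h‖) =O[𝓝 0]
        (fun h : EuclideanSpace ℝ (Fin n) => h) := by
      apply Asymptotics.IsBigO.of_bound 1
      filter_upwards with h
      simp
    have h5 := h3.trans_isBigO h4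
    refine h5.congr_left (fun h => ?_)
    simp
  · have hnz : ‖z‖ ≠ 0 := norm_ne_zero_iff.2 hz
    have hsq : (‖z‖ ^ 2 : ℝ) ≠ 0 := pow_ne_zero 2 hnz
    have h1 := (hasStrictFDerivAt_norm_sq z).hasFDerivAt
    have h2 := (Real.hasDerivAt_sqrt hsq).comp_hasFDerivAt z h1
    have h3 : HasDerivAt (fun u => ∫ t in (0:ℝ)..u, g t) (g ‖z‖) (Real.sqrt (‖z‖ ^ 2)) := by
      rw [Real.sqrt_sq (norm_nonneg z)]; exact hG ‖z‖
    have h4 := h3.comp_hasFDerivAt z h2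
    have hfun : ((fun u => ∫ t in (0:ℝ)..u, g t) ∘
        (Real.sqrt ∘ fun w : EuclideanSpace ℝ (Fin n) => ‖w‖ ^ 2))
        = fun w : EuclideanSpace ℝ (Fin n) => ∫ t in (0:ℝ)..‖w‖, g t := by
      funext w
      simp [Function.comp, Real.sqrt_sq (norm_nonneg w)]
    rw [hfun] at h4
    have hD : (g ‖z‖ • (1 / (2 * Real.sqrt (‖z‖ ^ 2))) • (2 • innerSL ℝ z))
        = innerSL ℝ (radialField g z) := by
      ext h
      simp only [ContinuousLinearMap.smul_apply, innerSL_apply_apply, radialField,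
        real_inner_smul_left, smul_eq_mul, two_smul, ContinuousLinearMap.add_apply,
        Real.sqrt_sq (norm_nonneg z)]
      field_simp
      ring
    rw [hD] at h4
    exact h4

lemma integrable_of_cont {n : ℕ} {β : Type*} [NormedAddCommGroup β]
    {μ : Measure (EuclideanSpace ℝ (Fin n))} [IsFiniteMeasure μ]
    {K : Set (EuclideanSpace ℝ (Fin n))} (hK : IsCompact K) (hKc : μ Kᶜ = 0)
    {f : EuclideanSpace ℝ (Fin n) → β} (hf : Continuous f) : Integrable f μ := by
  have hres : μ.restrict K = μ := by
    apply Measure.restrict_eq_self_of_ae_mem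
    rw [ae_iff]
    exact hKc
  rw [← hres]
  exact hf.continuousOn.integrableOn_compact hK

theorem center_of_mass_exists_compact_support {n : ℕ} (hn : 1 ≤ n)
    (g : ℝ → ℝ) (hg_cont : ContinuousOn g (Ici 0)) (hg0 : g 0 = 0)
    (hg_int : Tendsto (fun ρ => ∫ r in (0:ℝ)..ρ, g r) atTop atTop)
    (μ : Measure (EuclideanSpace ℝ (Fin n)))
    (hμpos : 0 < μ Set.univ) (hμfin : μ Set.univ < ⊤)
    (hμcpt : ∃ K : Set (EuclideanSpace ℝ (Fin n)), IsCompact K ∧ μ Kᶜ = 0) :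
    ∃ xc : EuclideanSpace ℝ (Fin n), VField g μ xc = 0 := by
  classical
  obtain ⟨K, hK, hKc⟩ := hμcpt
  haveI : IsFiniteMeasure μ := ⟨hμfin⟩
  set gt : ℝ → ℝ := fun r => g |r| with hgt_def
  have hgt_cont : Continuous gt := hg_cont.comp_continuous continuous_abs fun x => abs_nonneg x
  have hgt0 : gt 0 = 0 := by simp [hgt_def, hg0]
  have hgt_eq : ∀ r : ℝ, 0 ≤ r → gt r = g r := fun r hr => by
    simp [hgt_def, abs_of_nonneg hr]
  have hVeq : VField g μ = VField gt μ := by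
    funext x
    unfold VField radialField
    congr 1
    funext y
    rw [hgt_eq _ (norm_nonneg _)]
  have hae : ∀ᵐ y ∂μ, y ∈ K := by
    rw [ae_iff]; exact hKc
  set G : ℝ → ℝ := fun ρ => ∫ t in (0:ℝ)..ρ, gt t with hG_def
  have hGtop : Tendsto G atTop atTop := by
    refine hg_int.congr' ?_
    filter_upwards [Ici_mem_atTop (0:ℝ)] with ρ hρ
    apply intervalIntegral.integral_congr
    intro t ht
    rw [uIcc_of_le hρ] at ht
    exact (hgt_eq t ht.1).symm
  set Φ : EuclideanSpace ℝ (Fin n) → ℝ := fun x => ∫ y, G ‖x + y‖ ∂μ with hΦ_def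
  have hGnorm_cont : Continuous fun w : EuclideanSpace ℝ (Fin n) => G ‖w‖ :=
    continuous_iff_continuousAt.2 fun w =>
      (hasFDerivAt_primitive_norm hgt_cont hgt0 w).continuousAt
  have hrad_cont : Continuous (radialField (n := n) gt) := radialField_continuous hgt_cont hgt0
  obtain ⟨R, hR⟩ := hK.isBounded.subset_closedBall (0 : EuclideanSpace ℝ (Fin n))
  have htrans : ∀ x₀ : EuclideanSpace ℝ (Fin n),
      Continuous (fun y : EuclideanSpace ℝ (Fin n) => x₀ + y) :=
    fun x₀ => continuous_const.add continuous_id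
  have hΦint : ∀ x₀, Integrable (fun y => G ‖x₀ + y‖) μ := fun x₀ =>
    integrable_of_cont hK hKc (hGnorm_cont.comp (htrans x₀))
  have hΦdiff : ∀ x₀ : EuclideanSpace ℝ (Fin n),
      HasFDerivAt Φ (∫ y, innerSL ℝ (radialField gt (x₀ + y)) ∂μ) x₀ := by
    intro x₀
    obtain ⟨M, hM⟩ := (isCompact_Icc (a := (0:ℝ)) (b := ‖x₀‖ + 1 + R)).exists_bound_of_continuousOn
      hgt_cont.continuousOn
    rw [hΦ_def]
    refine hasFDerivAt_integral_of_dominated_of_fderiv_le (𝕜 := ℝ)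
      (F := fun x y => G ‖x + y‖)
      (F' := fun x y => innerSL ℝ (radialField gt (x + y)))
      (bound := fun _ => M) (Metric.ball_mem_nhds x₀ one_pos) ?_ ?_ ?_ ?_ ?_ ?_
    · exact Eventually.of_forall fun x => (hGnorm_cont.comp (htrans x)).aestronglyMeasurable
    · exact hΦint x₀
    · exact (((innerSL ℝ).continuous).comp (hrad_cont.comp (htrans x₀))).aestronglyMeasurable
    · filter_upwards [hae] with y hy
      intro x hx
      have h1 : ‖innerSL ℝ (radialField gt (x + y))‖ = ‖radialField gt (x + y)‖ :=
        innerSL_apply_norm _ _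
      rw [h1]
      refine (norm_radialField_le gt (x + y)).trans ?_
      have hyR : ‖y‖ ≤ R := by simpa [dist_eq_norm] using hR hy
      have hxn : ‖x‖ ≤ ‖x₀‖ + 1 := by
        have := mem_ball_iff_norm.1 hx
        have h2 : ‖x‖ - ‖x₀‖ ≤ ‖x - x₀‖ := norm_sub_norm_le x x₀
        linarith
      have hmem : ‖x + y‖ ∈ Icc (0:ℝ) (‖x₀‖ + 1 + R) := by
        constructor
        · exact norm_nonneg _
        · calc ‖x + y‖ ≤ ‖x‖ + ‖y‖ := norm_add_le x y
            _ ≤ ‖x₀‖ + 1 + R := by linarith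
      simpa using hM _ hmem
    · exact integrable_const M
    · refine Eventually.of_forall fun y x hx => ?_
      have htr : HasFDerivAt (fun x : EuclideanSpace ℝ (Fin n) => x + y)
          (ContinuousLinearMap.id ℝ (EuclideanSpace ℝ (Fin n))) x :=
        (hasFDerivAt_id x).add_const y
      have h := (hasFDerivAt_primitive_norm hgt_cont hgt0 (x + y)).comp x htr
      exact h
  have hΦcont : Continuous Φ := continuous_iff_continuousAt.2 fun x => (hΦdiff x).continuousAt
  have hmass : 0 < (μ univ).toReal := ENNReal.toReal_pos hμpos.ne' hμfin.ne
  have hcoer : Tendsto Φ (cocompact (EuclideanSpace ℝ (Fin n))) atTop := by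
    rw [tendsto_atTop]
    intro b
    obtain ⟨T, hT⟩ := eventually_atTop.1 (tendsto_atTop.1 hGtop (b / (μ univ).toReal))
    filter_upwards [tendsto_norm_cocompact_atTop.eventually_ge_atTop (T + R)] with x hx
    have hpt : ∀ᵐ y ∂μ, b / (μ univ).toReal ≤ G ‖x + y‖ := by
      filter_upwards [hae] with y hy
      apply hT
      have hyR : ‖y‖ ≤ R := by simpa [dist_eq_norm] using hR hy
      have h2 : ‖x‖ - ‖y‖ ≤ ‖x + y‖ := by
        have h3 : ‖x‖ ≤ ‖x + y‖ + ‖y‖ := by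
          calc ‖x‖ = ‖(x + y) - y‖ := by rw [add_sub_cancel_right]
            _ ≤ ‖x + y‖ + ‖y‖ := norm_sub_le _ _
        linarith
      linarith
    have hle := integral_mono_ae (integrable_const (b / (μ univ).toReal)) (hΦint x) hpt
    rw [integral_const, smul_eq_mul, measureReal_def, mul_div_cancel₀ _ hmass.ne'] at hle
    exact hle
  obtain ⟨x₀, hx₀⟩ := hΦcont.exists_forall_le hcoer
  have hmin : IsLocalMin Φ x₀ := Filter.Eventually.of_forall hx₀
  have hzero : (∫ y, innerSL ℝ (radialField gt (x₀ + y)) ∂μ) = 0 :=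
    hmin.hasFDerivAt_eq_zero (hΦdiff x₀)
  refine ⟨x₀, ?_⟩
  rw [hVeq]
  have hradint : Integrable (fun y => radialField gt (x₀ + y)) μ :=
    integrable_of_cont hK hKc (hrad_cont.comp (htrans x₀))
  have hFint : Integrable (fun y => innerSL ℝ (radialField gt (x₀ + y))) μ :=
    integrable_of_cont hK hKc (((innerSL ℝ).continuous).comp (hrad_cont.comp (htrans x₀)))
  have happ : ∀ v : EuclideanSpace ℝ (Fin n),
      ∫ y, ⟪radialField gt (x₀ + y), v⟫ ∂μ = 0 := by
    intro v
    have h1 := ContinuousLinearMap.integral_apply hFint v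
    rw [hzero] at h1
    simpa using h1.symm
  have hVdef : VField gt μ x₀ = ∫ y, radialField gt (x₀ + y) ∂μ := rfl
  have hVinner : ⟪VField gt μ x₀, VField gt μ x₀⟫ = 0 := by
    have h1 := integral_inner (𝕜 := ℝ) hradint (VField gt μ x₀)
    have h2 : ∫ y, ⟪VField gt μ x₀, radialField gt (x₀ + y)⟫ ∂μ = 0 := by
      rw [← happ (VField gt μ x₀)]
      exact integral_congr_ae (.of_forall fun y => real_inner_comm _ _)
    rw [h2] at h1
    rw [← hVdef] at h1
    exact h1.symm
  exact inner_self_eq_zero.1 hVinner
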